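/- Let A be an n×n complex matrix whose Hermitian part Re(A) = (A + A^H)/2 is positive definite, let P be an n×n Hermitian positive definite matrix, and let α > 0. Define the PHSS iteration matrix M(α) = (αP + i·Im(A))^{-1}(αP − Re(A))(αP + Re(A))^{-1}(αP − i·Im(A)). Then every eigenvalue μ of M(α) (i.e., every element of the spectrum of M(α) over ℂ) satisfies |μ| ≤ σ(α) := max over the eigenvalues λ of the Hermitian positive definite matrix P^{-1/2} Re(A) P^{-1/2} of |(α − λ)/(α + λ)|, and σ(α) < 1. -/

import Mathlib

open Matrix
open scoped ComplexOrder

open scoped Matrix.Norms.L2Operator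
set_option maxHeartbeats 1000000

lemma star_quad {n : ℕ} (M : Matrix (Fin n) (Fin n) ℂ) (v : Fin n → ℂ) :
    star (star v ⬝ᵥ M *ᵥ v) = star v ⬝ᵥ Mᴴ *ᵥ v := by
  rw [star_dotProduct, star_star, star_mulVec, ← dotProduct_mulVec]

lemma isUnit_of_re_pos {n : ℕ} {X : Matrix (Fin n) (Fin n) ℂ}
    (h : ∀ v, v ≠ 0 → 0 < (star v ⬝ᵥ X *ᵥ v).re) : IsUnit X := by
  rw [Matrix.isUnit_iff_isUnit_det, isUnit_iff_ne_zero]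
  intro hdet
  obtain ⟨v, hv, hXv⟩ := (Matrix.exists_mulVec_eq_zero_iff).mpr hdet
  have := h v hv
  rw [hXv] at this
  simp at this

lemma re_skew_eq_zero {n : ℕ} {S : Matrix (Fin n) (Fin n) ℂ} (hS : Sᴴ = -S) (v : Fin n → ℂ) :
    (star v ⬝ᵥ S *ᵥ v).re = 0 := by
  have h2 := congrArg Complex.re (star_quad S v)
  rw [hS] at h2
  simp only [Complex.star_def, Complex.conj_re, neg_mulVec, dotProduct_neg, Complex.neg_re] at h2
  linarith

lemma norm_eq_one_of_cstar {n : ℕ} (hn : 0 < n) {X : Matrix (Fin n) (Fin n) ℂ}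
    (h : Xᴴ * X = 1) : ‖X‖ = 1 := by
  haveI : Nonempty (Fin n) := ⟨⟨0, hn⟩⟩
  have h2 : ‖X‖ * ‖X‖ = 1 := by
    rw [← CStarRing.norm_star_mul_self]
    show ‖Xᴴ * X‖ = 1
    rw [h, CStarRing.norm_one]
  rcases mul_self_eq_one_iff.mp h2 with h3 | h3
  · exact h3
  · nlinarith [norm_nonneg X]

lemma l2_opNorm_diagonal_le {n : ℕ} (d : Fin n → ℂ) {c : ℝ} (hc : 0 ≤ c)
    (h : ∀ i, ‖d i‖ ≤ c) : ‖Matrix.diagonal d‖ ≤ c := by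
  rw [Matrix.l2_opNorm_def]
  refine ContinuousLinearMap.opNorm_le_bound _ hc fun x => ?_
  show ‖Matrix.toEuclideanLin (Matrix.diagonal d) x‖ ≤ c * ‖x‖
  rw [Matrix.toEuclideanLin_apply]
  rw [EuclideanSpace.norm_eq, EuclideanSpace.norm_eq]
  have key : ∀ i, ‖(WithLp.equiv 2 (Fin n → ℂ)).symm (Matrix.diagonal d *ᵥ (WithLp.equiv 2 (Fin n → ℂ)) x) i‖ ^ 2
      ≤ c ^ 2 * ‖x i‖ ^ 2 := by
    intro i
    have : (WithLp.equiv 2 (Fin n → ℂ)).symm (Matrix.diagonal d *ᵥ (WithLp.equiv 2 (Fin n → ℂ)) x) i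
        = d i * x i := by
      simp [Matrix.mulVec_diagonal]
    rw [this, norm_mul, mul_pow]
    have h1 : ‖d i‖ ≤ c := h i
    gcongr
  calc Real.sqrt (∑ i, ‖(WithLp.equiv 2 (Fin n → ℂ)).symm (Matrix.diagonal d *ᵥ (WithLp.equiv 2 (Fin n → ℂ)) x) i‖ ^ 2)
      ≤ Real.sqrt (∑ i, c ^ 2 * ‖x i‖ ^ 2) := by
        apply Real.sqrt_le_sqrt
        exact Finset.sum_le_sum fun i _ => key i
    _ = c * Real.sqrt (∑ i, ‖x i‖ ^ 2) := by
        rw [← Finset.mul_sum, Real.sqrt_mul (sq_nonneg c), Real.sqrt_sq hc]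

lemma spec_aux {A : Type*} [Ring A] [Algebra ℂ A] (u : Aˣ) (b : A) :
    spectrum ℂ ((↑u⁻¹ : A) * b) = spectrum ℂ (b * ↑u⁻¹) := by
  have h : (↑u⁻¹ : A) * (b * ↑u⁻¹) * ↑u = ↑u⁻¹ * b := by
    simp [mul_assoc]
  rw [← h, spectrum.units_conjugate']

lemma spectrum_inv_mul_comm {n : ℕ} {T : Matrix (Fin n) (Fin n) ℂ} (hT : IsUnit T)
    (K : Matrix (Fin n) (Fin n) ℂ) :
    spectrum ℂ (T⁻¹ * K) = spectrum ℂ (K * T⁻¹) := by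
  have h : T⁻¹ = (↑hT.unit⁻¹ : Matrix (Fin n) (Fin n) ℂ) := by
    rw [Matrix.coe_units_inv, hT.unit_spec]
  rw [h]; exact spec_aux hT.unit K

lemma spectrum_units_conj_matrix {n : ℕ} {Q : Matrix (Fin n) (Fin n) ℂ} (hQ : IsUnit Q)
    (X : Matrix (Fin n) (Fin n) ℂ) :
    spectrum ℂ (Q * X * Q⁻¹) = spectrum ℂ X := by
  obtain ⟨q, rfl⟩ := hQ
  rw [← Matrix.coe_units_inv]
  exact spectrum.units_conjugate

theorem aux {n : ℕ} (hn : 0 < n) (P Q H S : Matrix (Fin n) (Fin n) ℂ)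
    (hH : H.PosDef) (hP : P.PosDef) (α : ℝ) (hα : 0 < α)
    (hQ : Q.PosDef) (hQ2 : Q * Q = P⁻¹) (hS : Sᴴ = -S)
    (hB : (Q * H * Q).IsHermitian) :
    (∀ μ ∈ spectrum ℂ
        (((α : ℂ) • P + S)⁻¹ * ((α : ℂ) • P - H) * ((α : ℂ) • P + H)⁻¹ * ((α : ℂ) • P - S)),
        ‖μ‖ ≤ ⨆ i : Fin n, |(α - hB.eigenvalues i) / (α + hB.eigenvalues i)|) ∧
      (⨆ i : Fin n, |(α - hB.eigenvalues i) / (α + hB.eigenvalues i)|) < 1 := by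
  haveI hne : Nonempty (Fin n) := ⟨⟨0, hn⟩⟩
  haveI : Nontrivial (Matrix (Fin n) (Fin n) ℂ) := inferInstance
  set a : ℂ := (α : ℂ) with ha
  -- B is positive definite
  have hQinj : Function.Injective (Q.mulVec) := Matrix.mulVec_injective_iff_isUnit.mpr hQ.isUnit
  have hBpd : (Q * H * Q).PosDef := by
    refine Matrix.PosDef.of_dotProduct_mulVec_pos hB fun x hx => ?_
    have hx' : Q *ᵥ x ≠ 0 := fun h0 => hx (hQinj (by simpa using h0))
    have : star x ⬝ᵥ (Q * H * Q) *ᵥ x = star (Q *ᵥ x) ⬝ᵥ H *ᵥ (Q *ᵥ x) := by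
      rw [← Matrix.mulVec_mulVec, ← Matrix.mulVec_mulVec, dotProduct_mulVec,
        star_mulVec, hQ.1.eq]
    rw [this]
    exact hH.dotProduct_mulVec_pos hx'
  have hlam : ∀ i, 0 < hB.eigenvalues i := fun i => hBpd.eigenvalues_pos i
  set f : Fin n → ℝ := fun i => |(α - hB.eigenvalues i) / (α + hB.eigenvalues i)| with hf
  have hflt : ∀ i, f i < 1 := by
    intro i
    have h1 : (0:ℝ) < α + hB.eigenvalues i := add_pos hα (hlam i)
    show |(α - hB.eigenvalues i) / (α + hB.eigenvalues i)| < 1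
    rw [abs_div, abs_of_pos h1, div_lt_one h1, abs_lt]
    constructor <;> [linarith [hlam i]; linarith [hlam i]]
  have hσlt : (⨆ i, f i) < 1 := by
    have h1 : (⨆ i, f i) ≤ Finset.univ.sup' (Finset.univ_nonempty) f :=
      ciSup_le fun i => Finset.le_sup' f (Finset.mem_univ i)
    refine lt_of_le_of_lt h1 ((Finset.sup'_lt_iff Finset.univ_nonempty).mpr fun i _ => hflt i)
  have hbdd : BddAbove (Set.range f) := Set.Finite.bddAbove (Set.finite_range f)
  have hσ0 : 0 ≤ ⨆ i, f i :=
    le_trans (abs_nonneg _) (le_ciSup hbdd (⟨0, hn⟩ : Fin n))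
  refine ⟨?_, hσlt⟩
  intro μ hμ
  -- basic invertibility infrastructure
  have hQdet : IsUnit Q.det := (Matrix.isUnit_iff_isUnit_det Q).mp hQ.isUnit
  have hQQi : Q * Q⁻¹ = 1 := Matrix.mul_nonsing_inv _ hQdet
  have hQiQ : Q⁻¹ * Q = 1 := Matrix.nonsing_inv_mul _ hQdet
  have hQc1 : ∀ X : Matrix (Fin n) (Fin n) ℂ, Q * (Q⁻¹ * X) = X := fun X => by
    rw [← Matrix.mul_assoc, hQQi, Matrix.one_mul]
  have hQc2 : ∀ X : Matrix (Fin n) (Fin n) ℂ, Q⁻¹ * (Q * X) = X := fun X => by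
    rw [← Matrix.mul_assoc, hQiQ, Matrix.one_mul]
  have hQPQ : Q * P * Q = 1 := by
    have hPdet : IsUnit P.det := (Matrix.isUnit_iff_isUnit_det P).mp hP.isUnit
    have hPi : P = Q⁻¹ * Q⁻¹ := by
      rw [← Matrix.mul_inv_rev, hQ2, Matrix.nonsing_inv_nonsing_inv _ hPdet]
    rw [hPi, ← Matrix.mul_assoc, hQQi, Matrix.one_mul, hQiQ]
  -- real parts of quadratic forms
  have hposre : ∀ (W : Matrix (Fin n) (Fin n) ℂ), W.PosDef →
      ∀ v, v ≠ 0 → 0 < (star v ⬝ᵥ W *ᵥ v).re := by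
    intro W hW v hv
    have := hW.dotProduct_mulVec_pos hv
    rw [Complex.lt_def] at this
    simpa using this.1
  have hselfre : ∀ v : Fin n → ℂ, v ≠ 0 →
      0 < (star v ⬝ᵥ (1 : Matrix (Fin n) (Fin n) ℂ) *ᵥ v).re := by
    intro v hv
    exact hposre 1 Matrix.PosDef.one v hv
  have hS'h : (Q * S * Q)ᴴ = -(Q * S * Q) := by
    rw [conjTranspose_mul, conjTranspose_mul, hS, hQ.1.eq]
    simp only [Matrix.mul_neg, Matrix.neg_mul, Matrix.mul_assoc]
  -- units
  have hreform : ∀ (W Z : Matrix (Fin n) (Fin n) ℂ) (v : Fin n → ℂ),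
      (star v ⬝ᵥ (a • W + Z) *ᵥ v).re = α * (star v ⬝ᵥ W *ᵥ v).re + (star v ⬝ᵥ Z *ᵥ v).re := by
    intro W Z v
    simp only [add_mulVec, dotProduct_add, smul_mulVec, dotProduct_smul, smul_eq_mul,
      Complex.add_re, ha, Complex.re_ofReal_mul]
  have unit1 : IsUnit (a • P + S) := isUnit_of_re_pos fun v hv => by
    rw [hreform, re_skew_eq_zero hS v, add_zero]
    exact mul_pos hα (hposre P hP v hv)
  have unit2 : IsUnit (a • P + H) := isUnit_of_re_pos fun v hv => by
    rw [hreform]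
    exact add_pos (mul_pos hα (hposre P hP v hv)) (hposre H hH v hv)
  have unit3 : IsUnit (a • 1 + Q * H * Q) := isUnit_of_re_pos fun v hv => by
    rw [hreform]
    exact add_pos (mul_pos hα (hselfre v hv)) (hposre _ hBpd v hv)
  have unit4 : IsUnit (a • 1 + Q * S * Q) := isUnit_of_re_pos fun v hv => by
    rw [hreform, re_skew_eq_zero hS'h v, add_zero]
    exact mul_pos hα (hselfre v hv)
  have unit5 : IsUnit (a • 1 - Q * S * Q) := by
    rw [sub_eq_add_neg]
    refine isUnit_of_re_pos fun v hv => ?_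
    have hnS : (-(Q * S * Q))ᴴ = -(-(Q * S * Q)) := by rw [conjTranspose_neg, hS'h, neg_neg]
    rw [hreform, re_skew_eq_zero hnS v, add_zero]
    exact mul_pos hα (hselfre v hv)
  -- sandwich identities
  have sandwich : ∀ X : Matrix (Fin n) (Fin n) ℂ, Q⁻¹ * (Q * X * Q) * Q⁻¹ = X := by
    intro X
    calc Q⁻¹ * (Q * X * Q) * Q⁻¹ = Q⁻¹ * (Q * (X * (Q * Q⁻¹))) := by
          simp only [Matrix.mul_assoc]
      _ = X := by rw [hQQi, Matrix.mul_one, hQc2]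
  have keyinv : ∀ X Y : Matrix (Fin n) (Fin n) ℂ, Q * X * Q = Y → IsUnit Y →
      X⁻¹ = Q * Y⁻¹ * Q := by
    intro X Y hXY hY
    have hYdet : IsUnit Y.det := (Matrix.isUnit_iff_isUnit_det Y).mp hY
    apply Matrix.inv_eq_left_inv
    have hX : X = Q⁻¹ * Y * Q⁻¹ := by rw [← hXY, sandwich]
    rw [hX]
    calc Q * Y⁻¹ * Q * (Q⁻¹ * Y * Q⁻¹)
        = Q * (Y⁻¹ * ((Q * Q⁻¹) * (Y * Q⁻¹))) := by simp only [Matrix.mul_assoc]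
      _ = Q * (Y⁻¹ * (Y * Q⁻¹)) := by rw [hQQi, Matrix.one_mul]
      _ = Q * ((Y⁻¹ * Y) * Q⁻¹) := by simp only [Matrix.mul_assoc]
      _ = 1 := by rw [Matrix.nonsing_inv_mul _ hYdet, Matrix.one_mul, hQQi]
  have e1 : Q * (a • P - H) * Q = a • 1 - Q * H * Q := by
    rw [Matrix.mul_sub, Matrix.sub_mul, Matrix.mul_smul, Matrix.smul_mul, hQPQ]
  have e2 : Q * (a • P + H) * Q = a • 1 + Q * H * Q := by
    rw [Matrix.mul_add, Matrix.add_mul, Matrix.mul_smul, Matrix.smul_mul, hQPQ]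
  have e3 : Q * (a • P - S) * Q = a • 1 - Q * S * Q := by
    rw [Matrix.mul_sub, Matrix.sub_mul, Matrix.mul_smul, Matrix.smul_mul, hQPQ]
  have e4 : Q * (a • P + S) * Q = a • 1 + Q * S * Q := by
    rw [Matrix.mul_add, Matrix.add_mul, Matrix.mul_smul, Matrix.smul_mul, hQPQ]
  have inv2 : (a • P + H)⁻¹ = Q * (a • 1 + Q * H * Q)⁻¹ * Q := keyinv _ _ e2 unit3
  have inv4 : (a • P + S)⁻¹ = Q * (a • 1 + Q * S * Q)⁻¹ * Q := keyinv _ _ e4 unit4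
  have f1 : a • P - H = Q⁻¹ * (a • 1 - Q * H * Q) * Q⁻¹ := by rw [← e1, sandwich]
  have f3 : a • P - S = Q⁻¹ * (a • 1 - Q * S * Q) * Q⁻¹ := by rw [← e3, sandwich]
  -- move spectrum to the conjugated matrix
  set K : Matrix (Fin n) (Fin n) ℂ := (a • P - H) * (a • P + H)⁻¹ * (a • P - S) with hK
  have hM : (a • P + S)⁻¹ * (a • P - H) * (a • P + H)⁻¹ * (a • P - S)
      = (a • P + S)⁻¹ * K := by rw [hK]; simp only [Matrix.mul_assoc]
  rw [hM, spectrum_inv_mul_comm unit1 K,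
    ← spectrum_units_conj_matrix hQ.isUnit (K * (a • P + S)⁻¹)] at hμ
  -- the conjugated matrix is C * U
  have big : Q * (K * (a • P + S)⁻¹) * Q⁻¹
      = (a • 1 - Q * H * Q) * (a • 1 + Q * H * Q)⁻¹ *
        ((a • 1 - Q * S * Q) * (a • 1 + Q * S * Q)⁻¹) := by
    rw [hK, f1, inv2, f3, inv4]
    simp only [Matrix.mul_assoc, hQc1, hQc2, hQQi, Matrix.mul_one]
  rw [big] at hμ
  -- operator-norm instances
  haveI : CompleteSpace (Matrix (Fin n) (Fin n) ℂ) := by infer_instance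
  haveI : NormOneClass (Matrix (Fin n) (Fin n) ℂ) := ⟨CStarRing.norm_one⟩
  -- the Cayley transform of the skew part is unitary
  have hcomm : (a • 1 + Q*S*Q) * (a • 1 - Q*S*Q) = (a • 1 - Q*S*Q) * (a • 1 + Q*S*Q) := by
    simp only [Matrix.mul_sub, Matrix.sub_mul, Matrix.mul_add, Matrix.add_mul,
      Matrix.smul_mul, Matrix.mul_smul, Matrix.one_mul, Matrix.mul_one,
      smul_add, smul_sub]
    abel
  have hd4 : IsUnit (a • 1 + Q*S*Q).det := (Matrix.isUnit_iff_isUnit_det _).mp unit4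
  have hd5 : IsUnit (a • 1 - Q*S*Q).det := (Matrix.isUnit_iff_isUnit_det _).mp unit5
  have hstar_a : star a = a := by rw [ha, Complex.star_def, Complex.conj_ofReal]
  have h5 : (a • 1 + Q*S*Q)ᴴ = a • 1 - Q*S*Q := by
    rw [conjTranspose_add, conjTranspose_smul, conjTranspose_one, hS'h, hstar_a,
      sub_eq_add_neg]
  have h6 : (a • 1 - Q*S*Q)ᴴ = a • 1 + Q*S*Q := by
    rw [conjTranspose_sub, conjTranspose_smul, conjTranspose_one, hS'h, hstar_a,
      sub_neg_eq_add]
  have hUiso : ((a•1 - Q*S*Q) * (a•1 + Q*S*Q)⁻¹)ᴴ * ((a•1 - Q*S*Q) * (a•1 + Q*S*Q)⁻¹)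
      = 1 := by
    rw [conjTranspose_mul, Matrix.conjTranspose_nonsing_inv, h5, h6]
    calc (a•1 - Q*S*Q)⁻¹ * (a•1 + Q*S*Q) * ((a•1 - Q*S*Q) * (a•1 + Q*S*Q)⁻¹)
        = (a•1 - Q*S*Q)⁻¹ * ((a•1 + Q*S*Q) * (a•1 - Q*S*Q)) * (a•1 + Q*S*Q)⁻¹ := by
          simp only [Matrix.mul_assoc]
      _ = (a•1 - Q*S*Q)⁻¹ * ((a•1 - Q*S*Q) * ((a•1 + Q*S*Q) * (a•1 + Q*S*Q)⁻¹)) := by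
          rw [hcomm]; simp only [Matrix.mul_assoc]
      _ = 1 := by
          rw [Matrix.mul_nonsing_inv _ hd4, Matrix.mul_one, Matrix.nonsing_inv_mul _ hd5]
  have hUnorm : ‖(a•1 - Q*S*Q) * (a•1 + Q*S*Q)⁻¹‖ = 1 := norm_eq_one_of_cstar hn hUiso
  -- spectral theorem for B
  set V : Matrix (Fin n) (Fin n) ℂ := ↑(hB.eigenvectorUnitary) with hVdef
  have hVmem := hB.eigenvectorUnitary.2
  have hV2 : V * star V = 1 := (Matrix.mem_unitaryGroup_iff).mp hVmem
  have hV1 : star V * V = 1 := (Matrix.mem_unitaryGroup_iff').mp hVmem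
  have hV1c : ∀ X : Matrix (Fin n) (Fin n) ℂ, star V * (V * X) = X := fun X => by
    rw [← Matrix.mul_assoc, hV1, Matrix.one_mul]
  have hsp : Q * H * Q = V * Matrix.diagonal (RCLike.ofReal ∘ hB.eigenvalues) * star V :=
    hB.spectral_theorem
  have wmul : ∀ d e : Fin n → ℂ,
      (V * Matrix.diagonal d * star V) * (V * Matrix.diagonal e * star V)
        = V * Matrix.diagonal (fun i => d i * e i) * star V := by
    intro d e
    calc (V * Matrix.diagonal d * star V) * (V * Matrix.diagonal e * star V)
        = V * (Matrix.diagonal d * (star V * (V * (Matrix.diagonal e * star V)))) := by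
          simp only [Matrix.mul_assoc]
      _ = V * (Matrix.diagonal d * (Matrix.diagonal e * star V)) := by rw [hV1c]
      _ = V * (Matrix.diagonal d * Matrix.diagonal e) * star V := by
          simp only [Matrix.mul_assoc]
      _ = V * Matrix.diagonal (fun i => d i * e i) * star V := by
          rw [Matrix.diagonal_mul_diagonal]
  have hsmul1 : V * ((a • 1 : Matrix (Fin n) (Fin n) ℂ)) * star V = a • 1 := by
    rw [Matrix.mul_smul, Matrix.mul_one, Matrix.smul_mul, hV2]
  have d2 : a • 1 - Q * H * Q
      = V * Matrix.diagonal (fun i => a - (hB.eigenvalues i : ℂ)) * star V := by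
    conv_lhs => rw [← hsmul1, hsp]
    rw [← Matrix.sub_mul, ← Matrix.mul_sub, smul_one_eq_diagonal, Matrix.diagonal_sub]
    rfl
  have d1 : a • 1 + Q * H * Q
      = V * Matrix.diagonal (fun i => a + (hB.eigenvalues i : ℂ)) * star V := by
    conv_lhs => rw [← hsmul1, hsp]
    rw [← Matrix.add_mul, ← Matrix.mul_add, smul_one_eq_diagonal, Matrix.diagonal_add]
    rfl
  have hne0 : ∀ i, (a + (hB.eigenvalues i : ℂ)) ≠ 0 := by
    intro i
    have hcast : a + (hB.eigenvalues i : ℂ) = ((α + hB.eigenvalues i : ℝ) : ℂ) := by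
      rw [ha, Complex.ofReal_add]
    rw [hcast]
    exact_mod_cast ne_of_gt (add_pos hα (hlam i))
  have dinv : (a • 1 + Q * H * Q)⁻¹
      = V * Matrix.diagonal (fun i => (a + (hB.eigenvalues i : ℂ))⁻¹) * star V := by
    apply Matrix.inv_eq_left_inv
    rw [d1, wmul]
    have hone : (fun i => (a + (hB.eigenvalues i : ℂ))⁻¹ * (a + (hB.eigenvalues i : ℂ)))
        = fun _ : Fin n => (1:ℂ) := funext fun i => inv_mul_cancel₀ (hne0 i)
    rw [hone, show Matrix.diagonal (fun _ : Fin n => (1:ℂ)) = (1 : Matrix (Fin n) (Fin n) ℂ)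
      from Matrix.diagonal_one, Matrix.mul_one, hV2]
  have hCW : (a•1 - Q*H*Q) * (a•1 + Q*H*Q)⁻¹
      = V * Matrix.diagonal
          (fun i => (a - (hB.eigenvalues i : ℂ)) * (a + (hB.eigenvalues i : ℂ))⁻¹) * star V := by
    rw [d2, dinv, wmul]
  -- norm bounds
  have hVnorm : ‖V‖ = 1 := norm_eq_one_of_cstar hn
    (by rw [← Matrix.star_eq_conjTranspose]; exact hV1)
  have hVs : ‖star V‖ = 1 := norm_eq_one_of_cstar hn
    (by rw [← Matrix.star_eq_conjTranspose, star_star]; exact hV2)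
  have hgabs : ∀ i, ‖
      ((a - (hB.eigenvalues i : ℂ)) * (a + (hB.eigenvalues i : ℂ))⁻¹)‖ ≤ ⨆ j, f j := by
    intro i
    have hcast : (a - (hB.eigenvalues i : ℂ)) * (a + (hB.eigenvalues i : ℂ))⁻¹
        = (((α - hB.eigenvalues i)/(α + hB.eigenvalues i) : ℝ) : ℂ) := by
      rw [Complex.ofReal_div, div_eq_mul_inv, Complex.ofReal_sub, Complex.ofReal_add, ha]
    rw [hcast, Complex.norm_real, Real.norm_eq_abs]
    exact le_ciSup hbdd i
  have hdiagle : ‖Matrix.diagonal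
      (fun i => (a - (hB.eigenvalues i : ℂ)) * (a + (hB.eigenvalues i : ℂ))⁻¹)‖ ≤ ⨆ j, f j :=
    l2_opNorm_diagonal_le _ hσ0 hgabs
  have hCle : ‖(a•1 - Q*H*Q) * (a•1 + Q*H*Q)⁻¹‖ ≤ ⨆ j, f j := by
    rw [hCW]
    calc ‖V * Matrix.diagonal
          (fun i => (a - (hB.eigenvalues i : ℂ)) * (a + (hB.eigenvalues i : ℂ))⁻¹) * star V‖
        ≤ ‖V * Matrix.diagonal
          (fun i => (a - (hB.eigenvalues i : ℂ)) * (a + (hB.eigenvalues i : ℂ))⁻¹)‖ * ‖star V‖ :=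
          norm_mul_le _ _
      _ ≤ ‖V‖ * ‖Matrix.diagonal
          (fun i => (a - (hB.eigenvalues i : ℂ)) * (a + (hB.eigenvalues i : ℂ))⁻¹)‖ * ‖star V‖ := by
          exact mul_le_mul_of_nonneg_right (norm_mul_le _ _) (norm_nonneg _)
      _ = ‖Matrix.diagonal
          (fun i => (a - (hB.eigenvalues i : ℂ)) * (a + (hB.eigenvalues i : ℂ))⁻¹)‖ := by
          rw [hVnorm, hVs, one_mul, mul_one]
      _ ≤ ⨆ j, f j := hdiagle
  have hfin1 : ‖μ‖ ≤ ‖(a•1 - Q*H*Q) * (a•1 + Q*H*Q)⁻¹ *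
      ((a•1 - Q*S*Q) * (a•1 + Q*S*Q)⁻¹)‖ := spectrum.norm_le_norm_of_mem hμ
  calc ‖μ‖ = ‖μ‖ := rfl
    _ ≤ ‖(a•1 - Q*H*Q) * (a•1 + Q*H*Q)⁻¹ * ((a•1 - Q*S*Q) * (a•1 + Q*S*Q)⁻¹)‖ := hfin1
    _ ≤ ‖(a•1 - Q*H*Q) * (a•1 + Q*H*Q)⁻¹‖ * ‖(a•1 - Q*S*Q) * (a•1 + Q*S*Q)⁻¹‖ :=
        norm_mul_le _ _
    _ = ‖(a•1 - Q*H*Q) * (a•1 + Q*H*Q)⁻¹‖ := by rw [hUnorm, mul_one]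
    _ ≤ ⨆ j, f j := hCle


/-- Spectral radius bound for the PHSS iteration matrix
`M(α) = (αP + i Im A)⁻¹ (αP - Re A)(αP + Re A)⁻¹ (αP - i Im A)`: every eigenvalue `μ` of
`M(α)` satisfies `|μ| ≤ σ(α) := max_{λ ∈ λ(P^{-1/2} Re(A) P^{-1/2})} |(α-λ)/(α+λ)| < 1`.
Here `Q` plays the role of `P^{-1/2}`, i.e. `Q` is Hermitian positive definite with
`Q * Q = P⁻¹`, and `hB` records that `Q * Re(A) * Q` is Hermitian (which is automatic). -/
theorem stmt_3 {n : ℕ} (hn : 0 < n) (A P Q : Matrix (Fin n) (Fin n) ℂ)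
    (hRe : ((1 / 2 : ℂ) • (A + Aᴴ)).PosDef) (hP : P.PosDef)
    (α : ℝ) (hα : 0 < α)
    (hQ : Q.PosDef) (hQ2 : Q * Q = P⁻¹)
    (hB : (Q * ((1 / 2 : ℂ) • (A + Aᴴ)) * Q).IsHermitian) :
    (∀ μ ∈ spectrum ℂ
        (((α : ℂ) • P + Complex.I • ((1 / (2 * Complex.I) : ℂ) • (A - Aᴴ)))⁻¹ *
          ((α : ℂ) • P - (1 / 2 : ℂ) • (A + Aᴴ)) *
          ((α : ℂ) • P + (1 / 2 : ℂ) • (A + Aᴴ))⁻¹ *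
          ((α : ℂ) • P - Complex.I • ((1 / (2 * Complex.I) : ℂ) • (A - Aᴴ)))),
        ‖μ‖ ≤ ⨆ i : Fin n, |(α - hB.eigenvalues i) / (α + hB.eigenvalues i)|) ∧
      (⨆ i : Fin n, |(α - hB.eigenvalues i) / (α + hB.eigenvalues i)|) < 1 := by
  have hsm : Complex.I • ((1 / (2 * Complex.I) : ℂ) • (A - Aᴴ)) = (1/2 : ℂ) • (A - Aᴴ) := by
    rw [smul_smul]
    congr 1
    field_simp
  have hS : ((1/2 : ℂ) • (A - Aᴴ))ᴴ = -((1/2 : ℂ) • (A - Aᴴ)) := by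
    have h12 : star (1/2 : ℂ) = 1/2 := by simp
    rw [conjTranspose_smul, h12, conjTranspose_sub, conjTranspose_conjTranspose, ← smul_neg, neg_sub]
  rw [hsm]
  exact aux hn P Q ((1/2 : ℂ) • (A + Aᴴ)) ((1/2 : ℂ) • (A - Aᴴ)) hRe hP α hα hQ hQ2 hS hB
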